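/- Suppose S is a partial infinitary semigroup, a, b, e ∈ S, the product a*b*a*b*a*... indexed by ω is defined, and the identities a*b = e = b*a, a*e = a, b*e = b, and ∏_{n∈ω} e = e hold (where all displayed finite products are defined). Then a = e and b = e. -/
import Mathlib


/-- A partial infinitary semigroup: a type `S` with a partial product
(`none` = undefined) on sequences indexed by linearly ordered types, satisfying
(U) singleton products are defined and equal the unique entry, and
(N) generalized associativity under surjective order-preserving maps. -/
structure PartialInfSemigroup (S : Type) : Type 1 where
  prod : ∀ (I : Type) [LinearOrder I], (I → S) → Option S
  unit : ∀ (I : Type) [LinearOrder I] (a : I → S) (i : I),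
      (∀ j, j = i) → prod I a = some (a i)
  assoc : ∀ (I J : Type) [LinearOrder I] [LinearOrder J] (a : I → S) (π : I → J),
      Function.Surjective π → Monotone π → ∀ s : S, prod I a = some s →
      ∃ p : J → S,
        (∀ j : J, prod {i : I // π i = j} (fun i => a i.1) = some (p j)) ∧
        prod J p = some s

/-- Relabeling along a monotone bijection. -/
theorem PartialInfSemigroup.relabel {S : Type} (P : PartialInfSemigroup S)
    {I J : Type} [LinearOrder I] [LinearOrder J] (f : I → J)
    (hf : Function.Bijective f) (hm : Monotone f)
    (u : I → S) (v : J → S) (hcomp : ∀ i, v (f i) = u i) (s : S)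
    (h : P.prod I u = some s) : P.prod J v = some s := by
  obtain ⟨p, hp, hps⟩ := P.assoc I J u f hf.surjective hm s h
  have hpv : p = v := by
    funext j
    obtain ⟨i, hi⟩ := hf.surjective j
    have hu := P.unit {i : I // f i = j} (fun i => u i.1) ⟨i, hi⟩
      (fun j' => Subtype.ext (hf.injective (j'.2.trans hi.symm)))
    have h1 : p j = u i := Option.some.inj ((hp j).symm.trans hu)
    exact h1.trans ((hcomp i).symm.trans (by rw [hi]))
  rw [hpv] at hps
  exact hps

/-- If `abab⋯` (indexed by ω) is defined and `ab = e = ba`, `ae = a`, `be = b`,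
`ee⋯ = e`, then `a = e = b`. -/
theorem stmt4 {S : Type} (P : PartialInfSemigroup S) (a b e : S)
    (hab : P.prod (Fin 2) ![a, b] = some e)
    (hba : P.prod (Fin 2) ![b, a] = some e)
    (hae : P.prod (Fin 2) ![a, e] = some a)
    (hbe : P.prod (Fin 2) ![b, e] = some b)
    (hee : P.prod ℕ (fun _ => e) = some e)
    (habω : ∃ w : S, P.prod ℕ (fun n => if Even n then a else b) = some w) :
    a = e ∧ b = e := by

  obtain ⟨w, hw⟩ := habω
  set c : ℕ → S := fun n => if Even n then a else b with hc
  have hc_even : ∀ n, Even n → c n = a := fun n hn => if_pos hn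
  have hc_odd : ∀ n, ¬ Even n → c n = b := fun n hn => if_neg hn
  -- Step A : w = e, grouping pairs (ab)(ab)...
  have hwe : w = e := by
    obtain ⟨p, hp, hps⟩ := P.assoc ℕ ℕ c (fun n => n / 2)
      (fun j => ⟨2 * j, show 2 * j / 2 = j by omega⟩)
      (fun x y h => Nat.div_le_div_right h) w hw
    have hpj : ∀ j, p j = e := by
      intro j
      have hfib : P.prod {n : ℕ // n / 2 = j} (fun i => c i.1) = some e := by
        refine P.relabel (fun k : Fin 2 => (⟨2 * j + k.1,
            show (2 * j + k.1) / 2 = j by have := k.2; omega⟩ : {n : ℕ // n / 2 = j}))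
          ⟨fun k₁ k₂ h => Fin.ext (by
            have h' : 2 * j + k₁.1 = 2 * j + k₂.1 := congrArg Subtype.val h
            omega), ?_⟩
          (fun k₁ k₂ h => by
            simp only [Subtype.mk_le_mk]
            exact Nat.add_le_add_left (Fin.le_def.mp h) _)
          ![a, b] (fun i => c i.1) ?_ e hab
        · rintro ⟨n, hn⟩
          have hn' : n / 2 = j := hn
          refine ⟨⟨n - 2 * j, by omega⟩, Subtype.ext ?_⟩
          show 2 * j + (n - 2 * j) = n
          omega
        · intro k
          fin_cases k
          · simpa using (hc_even (2 * j + 0) ⟨j, by ring⟩)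
          · simpa using (hc_odd (2 * j + 1) (by rw [Nat.even_iff]; omega))
      exact Option.some.inj ((hp j).symm.trans hfib)
    have : p = fun _ => e := funext hpj
    rw [this, hee] at hps
    exact (Option.some.inj hps).symm
  -- Step B : grouping a, (ba), (ba), ...
  obtain ⟨p, hp, hps⟩ := P.assoc ℕ ℕ c (fun n => (n + 1) / 2)
    (fun j => ⟨2 * j, show (2 * j + 1) / 2 = j by omega⟩)
    (fun x y h => Nat.div_le_div_right (Nat.add_le_add_right h 1)) w hw
  have hp0 : p 0 = a := by
    have hu := P.unit {n : ℕ // (n + 1) / 2 = 0} (fun i => c i.1) ⟨0, rfl⟩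
      (fun j' => Subtype.ext (by
        have h2 : (j'.1 + 1) / 2 = 0 := j'.2
        show j'.1 = 0
        omega))
    have h1 := Option.some.inj ((hp 0).symm.trans hu)
    rw [h1]
    exact hc_even 0 ⟨0, rfl⟩
  have hpsucc : ∀ j, p (j + 1) = e := by
    intro j
    have hfib : P.prod {n : ℕ // (n + 1) / 2 = j + 1} (fun i => c i.1) = some e := by
      refine P.relabel
        (fun k : Fin 2 => (⟨2 * j + 1 + k.1,
          show (2 * j + 1 + k.1 + 1) / 2 = j + 1 by have := k.2; omega⟩ :
            {n : ℕ // (n + 1) / 2 = j + 1}))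
        ⟨fun k₁ k₂ h => Fin.ext (by
          have h' : 2 * j + 1 + k₁.1 = 2 * j + 1 + k₂.1 := congrArg Subtype.val h
          omega), ?_⟩
        (fun k₁ k₂ h => by
          simp only [Subtype.mk_le_mk]
          exact Nat.add_le_add_left (Fin.le_def.mp h) _)
        ![b, a] (fun i => c i.1) ?_ e hba
      · rintro ⟨n, hn⟩
        have hn' : (n + 1) / 2 = j + 1 := hn
        refine ⟨⟨n - (2 * j + 1), by omega⟩, Subtype.ext ?_⟩
        show 2 * j + 1 + (n - (2 * j + 1)) = n
        omega
      · intro k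
        fin_cases k
        · simpa using (hc_odd (2 * j + 1 + 0) (by rw [Nat.even_iff]; omega))
        · simpa using (hc_even (2 * j + 1 + 1) ⟨j + 1, by ring⟩)
    exact Option.some.inj ((hp (j + 1)).symm.trans hfib)
  -- Step C : regroup a, (eee...) as two blocks
  obtain ⟨q, hq, hqs⟩ := P.assoc ℕ (Fin 2) p (fun n => if n = 0 then 0 else 1)
    (fun j => by
      fin_cases j
      · exact ⟨0, rfl⟩
      · exact ⟨1, rfl⟩)
    (fun x y h => by
      by_cases hx : x = 0
      · subst hx; simp only [if_pos rfl]; exact Fin.zero_le _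
      · have hy : y ≠ 0 := by omega
        simp [hx, hy]) w hps
  have hq0 : q 0 = a := by
    have hu := P.unit {n : ℕ // (if n = 0 then (0 : Fin 2) else 1) = 0} (fun i => p i.1)
      ⟨0, rfl⟩
      (fun j' => Subtype.ext (by
        show j'.1 = 0
        by_contra hne
        have h2 : (if j'.1 = 0 then (0 : Fin 2) else 1) = 0 := j'.2
        rw [if_neg hne] at h2
        exact absurd h2 (by decide)))
    have h1 := Option.some.inj ((hq 0).symm.trans hu)
    rw [h1]
    exact hp0
  have hq1 : q 1 = e := by
    have hfib : P.prod {n : ℕ // (if n = 0 then (0 : Fin 2) else 1) = 1} (fun i => p i.1)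
        = some e := by
      refine P.relabel
        (fun m : ℕ => (⟨m + 1,
          show (if m + 1 = 0 then (0 : Fin 2) else 1) = 1 by
            rw [if_neg (Nat.succ_ne_zero m)]⟩ :
          {n : ℕ // (if n = 0 then (0 : Fin 2) else 1) = 1}))
        ⟨fun m₁ m₂ h => by
          have h' : m₁ + 1 = m₂ + 1 := congrArg Subtype.val h
          omega, ?_⟩
        (fun m₁ m₂ h => by simp only [Subtype.mk_le_mk]; omega)
        (fun _ => e) (fun i => p i.1) ?_ e hee
      · rintro ⟨n, hn⟩
        have hn' : (if n = 0 then (0 : Fin 2) else 1) = 1 := hn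
        have hn0 : n ≠ 0 := by
          intro h0
          rw [if_pos h0] at hn'
          exact absurd hn' (by decide)
        refine ⟨n - 1, Subtype.ext ?_⟩
        show n - 1 + 1 = n
        omega
      · intro m
        exact hpsucc m
    exact Option.some.inj ((hq 1).symm.trans hfib)
  have hqeq : q = ![a, e] := by
    funext k
    fin_cases k
    · simpa using hq0
    · simpa using hq1
  rw [hqeq, hae] at hqs
  have haw : a = w := Option.some.inj hqs
  have hae' : a = e := haw.trans hwe
  refine ⟨hae', ?_⟩
  have hbae : (![b, a] : Fin 2 → S) = ![b, e] := by rw [hae']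
  rw [hbae, hbe] at hba
  exact Option.some.inj hba
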